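/- arXiv:2411.15956 — 3 statements merged into one kernel-verified Lean document; each statement's English description precedes it below -/
import Mathlib

section
/- Let g ∈ Mat_{n+4}(ℝ) satisfy gᵗS₁g = S₁, and suppose there exists λ ∈ ℂ such that g·v = λ·v, where v = (1, i, 0, …, 0, i, 1)ᵗ ∈ ℂ^{n+4} (first coordinate 1, second coordinate i, then n zeros, then i, then 1). Then gᵗR_Ig = R_I; equivalently, (g⁻¹)ᵗR_Ig⁻¹ = R_I, i.e. R_I[g⁻¹] = R_I. -/
open Matrix

noncomputable section

def triBorder {α : Type*} [Zero α] [One α] {m : ℕ} (A : Matrix (Fin m) (Fin m) α) :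
    Matrix (Fin (m + 2)) (Fin (m + 2)) α :=
  Matrix.of fun i j =>
    if hij : 0 < i.val ∧ i.val < m + 1 ∧ 0 < j.val ∧ j.val < m + 1 then
      A ⟨i.val - 1, by omega⟩ ⟨j.val - 1, by omega⟩
    else if (i.val = 0 ∧ j.val = m + 1) ∨ (i.val = m + 1 ∧ j.val = 0) then 1 else 0

def matS0 (n : ℕ) (S : Matrix (Fin n) (Fin n) ℝ) : Matrix (Fin (n + 2)) (Fin (n + 2)) ℝ :=
  triBorder (-S)

def matS1 (n : ℕ) (S : Matrix (Fin n) (Fin n) ℝ) : Matrix (Fin (n + 4)) (Fin (n + 4)) ℝ :=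
  triBorder (matS0 n S)

def matRI (n : ℕ) (S : Matrix (Fin n) (Fin n) ℝ) : Matrix (Fin (n + 4)) (Fin (n + 4)) ℝ :=
  Matrix.of fun i j =>
    if hij : 2 ≤ i.val ∧ i.val < n + 2 ∧ 2 ≤ j.val ∧ j.val < n + 2 then
      S ⟨i.val - 2, by omega⟩ ⟨j.val - 2, by omega⟩
    else if i = j then 1 else 0

lemma matS1_apply (n : ℕ) (A : Matrix (Fin n) (Fin n) ℝ) (i j : Fin (n + 4)) :
    matS1 n A i j =
      if h : 2 ≤ i.val ∧ i.val < n + 2 ∧ 2 ≤ j.val ∧ j.val < n + 2 then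
        -A ⟨i.val - 2, by omega⟩ ⟨j.val - 2, by omega⟩
      else if (i.val = 0 ∧ j.val = n + 3) ∨ (i.val = n + 3 ∧ j.val = 0)
            ∨ (i.val = 1 ∧ j.val = n + 2) ∨ (i.val = n + 2 ∧ j.val = 1) then 1 else 0 := by
  unfold matS1 matS0 triBorder
  simp only [Matrix.of_apply, Matrix.neg_apply]
  split_ifs <;> first
    | rfl
    | omega
    | (congr 2 <;> omega)

def tubeV (n : ℕ) : Fin (n + 4) → ℂ := fun k =>
  if k.val = 0 ∨ k.val = n + 3 then 1
  else if k.val = 1 ∨ k.val = n + 2 then Complex.I else 0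

/-- real "x" vector -/
def xv (n : ℕ) : Fin (n + 4) → ℝ := fun k => if k.val = 0 ∨ k.val = n + 3 then 1 else 0
/-- real "y" vector -/
def yv (n : ℕ) : Fin (n + 4) → ℝ := fun k => if k.val = 1 ∨ k.val = n + 2 then 1 else 0

lemma keyR (n : ℕ) (A : Matrix (Fin n) (Fin n) ℝ) :
    matRI n A = vecMulVec (xv n) (xv n) + vecMulVec (yv n) (yv n) - matS1 n A := by
  ext i j
  rw [Matrix.sub_apply, Matrix.add_apply, matS1_apply, Matrix.vecMulVec_apply,
    Matrix.vecMulVec_apply]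
  unfold matRI xv yv
  simp only [Matrix.of_apply]
  rcases i with ⟨i, hi⟩
  rcases j with ⟨j, hj⟩
  simp only [Fin.mk.injEq]
  split_ifs <;> first | (exfalso; omega) | ring

def xc (n : ℕ) : Fin (n + 4) → ℂ := fun k => ((xv n k : ℝ) : ℂ)
def yc (n : ℕ) : Fin (n + 4) → ℂ := fun k => ((yv n k : ℝ) : ℂ)

lemma tubeV_eq (n : ℕ) : tubeV n = xc n + Complex.I • yc n := by
  funext k
  simp only [tubeV, xc, yc, xv, yv, Pi.add_apply, Pi.smul_apply, smul_eq_mul]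
  split_ifs <;> first | (exfalso; omega) | simp

lemma star_tubeV (n : ℕ) : star (tubeV n) = xc n - Complex.I • yc n := by
  funext k
  simp only [tubeV, xc, yc, xv, yv, Pi.star_apply, Pi.sub_apply, Pi.smul_apply, smul_eq_mul]
  split_ifs <;> first | (exfalso; omega) | simp

lemma tubeV_decomp (n : ℕ) :
    tubeV n = Pi.single (⟨0, by omega⟩ : Fin (n + 4)) 1
      + Pi.single (⟨1, by omega⟩ : Fin (n + 4)) Complex.I
      + Pi.single (⟨n + 2, by omega⟩ : Fin (n + 4)) Complex.I
      + Pi.single (⟨n + 3, by omega⟩ : Fin (n + 4)) 1 := by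
  funext k
  simp only [tubeV, Pi.add_apply, Pi.single_apply, Fin.ext_iff]
  split_ifs <;> first | (exfalso; omega) | simp

lemma star_tubeV_decomp (n : ℕ) :
    star (tubeV n) = Pi.single (⟨0, by omega⟩ : Fin (n + 4)) 1
      + Pi.single (⟨1, by omega⟩ : Fin (n + 4)) (-Complex.I)
      + Pi.single (⟨n + 2, by omega⟩ : Fin (n + 4)) (-Complex.I)
      + Pi.single (⟨n + 3, by omega⟩ : Fin (n + 4)) 1 := by
  funext k
  simp only [tubeV, Pi.star_apply, Pi.add_apply, Pi.single_apply, Fin.ext_iff]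
  split_ifs <;> first | (exfalso; omega) | simp

lemma tubeV_at0 (n : ℕ) : tubeV n ⟨0, by omega⟩ = 1 := by
  simp [tubeV]
lemma tubeV_at1 (n : ℕ) : tubeV n ⟨1, by omega⟩ = Complex.I := by
  simp only [tubeV]
  split_ifs <;> first | (exfalso; omega) | rfl | simp_all
lemma tubeV_at2 (n : ℕ) : tubeV n ⟨n + 2, by omega⟩ = Complex.I := by
  simp only [tubeV]
  split_ifs <;> first | (exfalso; omega) | rfl | simp_all
lemma tubeV_at3 (n : ℕ) : tubeV n ⟨n + 3, by omega⟩ = 1 := by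
  simp only [tubeV]
  split_ifs <;> first | (exfalso; omega) | rfl | simp_all

lemma dot4 (n : ℕ) : star (tubeV n) ⬝ᵥ tubeV n = 4 := by
  rw [star_tubeV_decomp]
  simp only [add_dotProduct, single_dotProduct, tubeV_at0, tubeV_at1, tubeV_at2,
    tubeV_at3]
  simp [Complex.I_mul_I]
  ring

lemma S1_col (n : ℕ) (A : Matrix (Fin n) (Fin n) ℝ) (i j : Fin (n + 4)) :
    (j.val = 0 → matS1 n A i j = if i.val = n + 3 then 1 else 0) ∧
    (j.val = 1 → matS1 n A i j = if i.val = n + 2 then 1 else 0) ∧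
    (j.val = n + 2 → matS1 n A i j = if i.val = 1 then 1 else 0) ∧
    (j.val = n + 3 → matS1 n A i j = if i.val = 0 then 1 else 0) := by
  rw [matS1_apply]
  refine ⟨fun hj => ?_, fun hj => ?_, fun hj => ?_, fun hj => ?_⟩ <;>
    split_ifs <;> first | rfl | omega

lemma S1c_mulVec (n : ℕ) (A : Matrix (Fin n) (Fin n) ℝ) :
    (matS1 n A).map Complex.ofReal *ᵥ tubeV n = tubeV n := by
  have h : ∀ i j, (matS1 n A).map Complex.ofReal i j = ((matS1 n A i j : ℝ) : ℂ) :=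
    fun i j => rfl
  funext i
  conv_lhs => rw [tubeV_decomp]
  simp only [Matrix.mulVec_add, Matrix.mulVec_single, Pi.add_apply, Pi.smul_apply, op_smul_eq_mul,
    Matrix.col_apply, h]
  rw [(S1_col n A i _).1 rfl, (S1_col n A i _).2.1 rfl, (S1_col n A i _).2.2.1 rfl,
    (S1_col n A i _).2.2.2 rfl]
  simp only [tubeV]
  split_ifs <;> first | (exfalso; omega) | simp

lemma matRI_mid {n : ℕ} (A : Matrix (Fin n) (Fin n) ℝ) {i j : Fin (n + 4)}
    (hi : 2 ≤ i.val ∧ i.val < n + 2) (hj : 2 ≤ j.val ∧ j.val < n + 2) :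
    matRI n A i j = A ⟨i.val - 2, by omega⟩ ⟨j.val - 2, by omega⟩ := by
  simp only [matRI, Matrix.of_apply]
  rw [dif_pos ⟨hi.1, hi.2, hj.1, hj.2⟩]

lemma matRI_off {n : ℕ} (A : Matrix (Fin n) (Fin n) ℝ) {i j : Fin (n + 4)}
    (h : ¬(2 ≤ i.val ∧ i.val < n + 2) ∨ ¬(2 ≤ j.val ∧ j.val < n + 2)) :
    matRI n A i j = if i = j then 1 else 0 := by
  simp only [matRI, Matrix.of_apply]
  rw [dif_neg (by omega)]

/-- reindexing sums supported in the middle block -/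
lemma sum_mid {M : Type*} [AddCommMonoid M] (n : ℕ) (f : Fin (n + 4) → M)
    (hf : ∀ j : Fin (n + 4), ¬(2 ≤ j.val ∧ j.val < n + 2) → f j = 0) :
    ∑ j, f j = ∑ k : Fin n, f ⟨k.val + 2, by omega⟩ := by
  classical
  have hinj : Function.Injective (fun k : Fin n => (⟨k.val + 2, by omega⟩ : Fin (n + 4))) := by
    intro a b hab
    apply Fin.ext
    have := congrArg Fin.val hab
    simpa using this
  have hm := Finset.sum_map (Finset.univ : Finset (Fin n))
    ⟨fun k : Fin n => (⟨k.val + 2, by omega⟩ : Fin (n + 4)), hinj⟩ f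
  simp only [Function.Embedding.coeFn_mk] at hm
  rw [← hm]
  refine (Finset.sum_subset (Finset.subset_univ _) ?_).symm
  intro x _ hx
  refine hf x fun hmid => hx ?_
  simp only [Finset.mem_map, Finset.mem_univ, Function.Embedding.coeFn_mk, true_and]
  exact ⟨⟨x.val - 2, by omega⟩, Fin.ext (by simp; omega)⟩

lemma matRI_mul (n : ℕ) (A B : Matrix (Fin n) (Fin n) ℝ) :
    matRI n A * matRI n B = matRI n (A * B) := by
  ext i j
  rw [Matrix.mul_apply]
  by_cases hi : 2 ≤ i.val ∧ i.val < n + 2 <;> by_cases hj : 2 ≤ j.val ∧ j.val < n + 2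
  · -- both middle
    rw [matRI_mid (A * B) hi hj, Matrix.mul_apply,
      sum_mid n _ (fun k hk => by
        rw [matRI_off A (Or.inr hk), if_neg (by rintro rfl; exact hk hi), zero_mul])]
    refine Finset.sum_congr rfl fun k _ => ?_
    rw [matRI_mid A hi (by simp), matRI_mid B (by simp) hj]
    rfl
  · rw [matRI_off (A * B) (Or.inr hj), if_neg (by rintro rfl; exact hj hi)]
    refine Finset.sum_eq_zero fun k _ => ?_
    by_cases hk : 2 ≤ k.val ∧ k.val < n + 2
    · rw [matRI_off B (Or.inr hj), if_neg (by rintro rfl; exact hj hk), mul_zero]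
    · rw [matRI_off A (Or.inr hk), if_neg (by rintro rfl; exact hk hi), zero_mul]
  · rw [matRI_off (A * B) (Or.inl hi), if_neg (by rintro rfl; exact hi hj)]
    refine Finset.sum_eq_zero fun k _ => ?_
    by_cases hk : 2 ≤ k.val ∧ k.val < n + 2
    · rw [matRI_off A (Or.inl hi), if_neg (by rintro rfl; exact hi hk), zero_mul]
    · rw [matRI_off B (Or.inl hk), if_neg (by rintro rfl; exact hk hj), mul_zero]
  · rw [matRI_off (A * B) (Or.inl hi)]
    have : ∀ k : Fin (n + 4), matRI n A i k * matRI n B k j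
        = if k = i then (if i = j then (1 : ℝ) else 0) else 0 := by
      intro k
      rw [matRI_off A (Or.inl hi), matRI_off B (Or.inr hj)]
      by_cases h1 : i = k <;> by_cases h2 : k = j <;>
        simp_all <;> grind
    rw [Finset.sum_congr rfl fun k _ => this k, Finset.sum_ite_eq']
    simp

lemma matRI_one (n : ℕ) : matRI n (1 : Matrix (Fin n) (Fin n) ℝ) = 1 := by
  ext i j
  by_cases hi : 2 ≤ i.val ∧ i.val < n + 2 <;> by_cases hj : 2 ≤ j.val ∧ j.val < n + 2
  · rw [matRI_mid 1 hi hj]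
    simp only [Matrix.one_apply, Fin.mk.injEq, Fin.ext_iff]
    split_ifs <;> first | rfl | omega
  · rw [matRI_off 1 (Or.inr hj), Matrix.one_apply]
  · rw [matRI_off 1 (Or.inl hi), Matrix.one_apply]
  · rw [matRI_off 1 (Or.inl hi), Matrix.one_apply]

lemma conj_vecMulVec {m : Type*} [Fintype m] (A : Matrix m m ℂ) (a b : m → ℂ) :
    Aᵀ * vecMulVec a b * A = vecMulVec (Aᵀ *ᵥ a) (Aᵀ *ᵥ b) := by
  ext i j
  simp only [Matrix.mul_apply, Matrix.vecMulVec_apply, Matrix.mulVec, dotProduct,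
    Matrix.transpose_apply, Finset.sum_mul, Finset.mul_sum]
  exact Finset.sum_congr rfl fun k _ => Finset.sum_congr rfl fun l _ => by ring

lemma vecMulVec_smul₂ {m : Type*} (c d : ℂ) (a b : m → ℂ) :
    vecMulVec (c • a) (d • b) = (c * d) • vecMulVec a b := by
  ext i j
  simp only [Matrix.vecMulVec_apply, Pi.smul_apply, Matrix.smul_apply, smul_eq_mul]
  ring

lemma sum2 (n : ℕ) :
    vecMulVec (tubeV n) (star (tubeV n)) + vecMulVec (star (tubeV n)) (tubeV n)
      = (2 : ℂ) • (vecMulVec (xc n) (xc n) + vecMulVec (yc n) (yc n)) := by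
  rw [star_tubeV, tubeV_eq]
  ext i j
  simp only [Matrix.add_apply, Matrix.smul_apply, Matrix.vecMulVec_apply, Pi.add_apply,
    Pi.sub_apply, Pi.smul_apply, smul_eq_mul]
  have hI := Complex.I_mul_I
  ring_nf
  rw [Complex.I_sq]
  ring

lemma keyC (n : ℕ) (A : Matrix (Fin n) (Fin n) ℝ) :
    (matRI n A).map Complex.ofReal
      = vecMulVec (xc n) (xc n) + vecMulVec (yc n) (yc n)
        - (matS1 n A).map Complex.ofReal := by
  rw [keyR]
  ext i j
  simp only [Matrix.map_apply, Matrix.sub_apply, Matrix.add_apply, Matrix.vecMulVec_apply, xc, yc]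
  push_cast
  ring

/-- **Stabilizer of the base point preserves the majorant `R_I`.**
If `gᵀ S₁ g = S₁` and `g·v = λ·v` for some `λ ∈ ℂ`, where
`v = (1, i, 0, …, 0, i, 1)ᵗ`, then `gᵀ R_I g = R_I`; equivalently
`(g⁻¹)ᵀ R_I g⁻¹ = R_I`, i.e. `R_I[g⁻¹] = R_I`. -/
theorem stmt3 (n : ℕ) (hn : 1 ≤ n) (S : Matrix (Fin n) (Fin n) ℤ)
    (hSsymm : S.IsSymm) (hSpos : (S.map (Int.cast : ℤ → ℝ)).PosDef)
    (hSeven : ∀ x : Fin n → ℤ, 2 ∣ x ⬝ᵥ S.mulVec x)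
    (g : Matrix (Fin (n + 4)) (Fin (n + 4)) ℝ)
    (hg : gᵀ * matS1 n (S.map (Int.cast : ℤ → ℝ)) * g = matS1 n (S.map (Int.cast : ℤ → ℝ)))
    (hfix : ∃ lam : ℂ, (g.map (Complex.ofReal)) *ᵥ tubeV n = lam • tubeV n) :
    gᵀ * matRI n (S.map (Int.cast : ℤ → ℝ)) * g = matRI n (S.map (Int.cast : ℤ → ℝ)) ∧
    (g⁻¹)ᵀ * matRI n (S.map (Int.cast : ℤ → ℝ)) * g⁻¹ = matRI n (S.map (Int.cast : ℤ → ℝ)) := by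
  obtain ⟨lam, hlam⟩ := hfix
  set Sr : Matrix (Fin n) (Fin n) ℝ := S.map (Int.cast : ℤ → ℝ) with hSrdef
  set gc : Matrix (Fin (n + 4)) (Fin (n + 4)) ℂ := g.map Complex.ofReal with hgcdef
  set v : Fin (n + 4) → ℂ := tubeV n with hvdef
  have hmapmul : ∀ (A B : Matrix (Fin (n + 4)) (Fin (n + 4)) ℝ),
      (A * B).map Complex.ofReal = A.map Complex.ofReal * B.map Complex.ofReal := by
    intro A B
    exact Matrix.map_mul (f := Complex.ofRealHom)
  have htr : gᵀ.map Complex.ofReal = gcᵀ := Matrix.transpose_map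
  have hgc : gcᵀ * (matS1 n Sr).map Complex.ofReal * gc = (matS1 n Sr).map Complex.ofReal := by
    have h := congrArg (fun M => M.map Complex.ofReal) hg
    simp only [hmapmul, htr] at h
    exact h
  have hS1v : (matS1 n Sr).map Complex.ofReal *ᵥ v = v := S1c_mulVec n Sr
  have hstar_mul : ∀ (A : Matrix (Fin (n + 4)) (Fin (n + 4)) ℝ) (u : Fin (n + 4) → ℂ),
      A.map Complex.ofReal *ᵥ star u = star (A.map Complex.ofReal *ᵥ u) := by
    intro A u
    funext i
    simp only [Matrix.mulVec, dotProduct, Pi.star_apply, Matrix.map_apply]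
    rw [star_sum]
    exact Finset.sum_congr rfl fun k _ => by
      rw [star_mul']
      simp [Complex.conj_ofReal]
  have hlamstar : gc *ᵥ star v = star lam • star v := by
    rw [hgcdef, hstar_mul g v, ← hgcdef, hlam, star_smul]
  have e0 : lam • (gcᵀ *ᵥ v) = v := by
    have h := congrArg (fun M => M *ᵥ v) hgc
    rw [← Matrix.mulVec_mulVec, ← Matrix.mulVec_mulVec, hlam, Matrix.mulVec_smul, hS1v,
      Matrix.mulVec_smul] at h
    exact h
  have hls : star lam * lam = 1 := by
    have h4 : star v ⬝ᵥ v = 4 := dot4 n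
    have h := congrArg (fun w => star v ⬝ᵥ w) e0
    rw [dotProduct_smul, Matrix.dotProduct_mulVec, Matrix.vecMul_transpose, hlamstar,
      smul_dotProduct, h4] at h
    simp only [smul_eq_mul] at h
    have h4ne : (4 : ℂ) ≠ 0 := by norm_num
    apply mul_right_cancel₀ h4ne
    rw [one_mul]
    linear_combination h
  have e2 : gcᵀ *ᵥ v = star lam • v := by
    calc gcᵀ *ᵥ v = (star lam * lam) • (gcᵀ *ᵥ v) := by rw [hls, one_smul]
    _ = star lam • (lam • (gcᵀ *ᵥ v)) := by rw [mul_smul]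
    _ = star lam • v := by rw [e0]
  have e3 : gcᵀ *ᵥ star v = lam • star v := by
    rw [← htr, hstar_mul gᵀ v, htr, e2, star_smul, star_star]
  have hW : gcᵀ * (vecMulVec v (star v) + vecMulVec (star v) v) * gc
      = vecMulVec v (star v) + vecMulVec (star v) v := by
    rw [Matrix.mul_add, Matrix.add_mul, conj_vecMulVec, conj_vecMulVec, e2, e3,
      vecMulVec_smul₂, vecMulVec_smul₂, show star lam * lam = 1 from hls,
      show lam * star lam = 1 by linear_combination hls, one_smul, one_smul]
  have hXY : gcᵀ * (vecMulVec (xc n) (xc n) + vecMulVec (yc n) (yc n)) * gc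
      = vecMulVec (xc n) (xc n) + vecMulVec (yc n) (yc n) := by
    have h2 := hW
    rw [hvdef, sum2 n, Matrix.mul_smul, Matrix.smul_mul] at h2
    exact smul_right_injective _ (two_ne_zero) h2
  have hmain : gᵀ * matRI n Sr * g = matRI n Sr := by
    apply Matrix.map_injective Complex.ofReal_injective
    show (gᵀ * matRI n Sr * g).map Complex.ofReal = (matRI n Sr).map Complex.ofReal
    rw [hmapmul, hmapmul, htr, keyC, Matrix.mul_sub, Matrix.sub_mul, hXY, hgc]
  refine ⟨hmain, ?_⟩
  have hSun : IsUnit Sr.det := isUnit_iff_ne_zero.mpr (ne_of_gt hSpos.det_pos)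
  have hRun : IsUnit (matRI n Sr).det := by
    apply Matrix.isUnit_det_of_right_inverse (B := matRI n Sr⁻¹)
    rw [matRI_mul, Matrix.mul_nonsing_inv _ hSun, matRI_one]
  have hgun : IsUnit g.det := by
    have hd := congrArg Matrix.det hmain
    rw [Matrix.det_mul, Matrix.det_mul, Matrix.det_transpose] at hd
    rw [isUnit_iff_ne_zero]
    intro h0
    rw [h0, zero_mul, zero_mul] at hd
    exact isUnit_iff_ne_zero.mp hRun hd.symm
  have hinv1 : g * g⁻¹ = 1 := Matrix.mul_nonsing_inv g hgun
  calc (g⁻¹)ᵀ * matRI n Sr * g⁻¹ = (g⁻¹)ᵀ * (gᵀ * matRI n Sr * g) * g⁻¹ := by rw [hmain]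
  _ = ((g * g⁻¹)ᵀ * matRI n Sr) * (g * g⁻¹) := by
      simp only [Matrix.transpose_mul, Matrix.mul_assoc]
  _ = matRI n Sr := by rw [hinv1]; simp

end
end

section
/- Let Γ be a subgroup of {g ∈ SL_{n+4}(ℤ) : gᵗS₁g = S₁} such that: (i) for every D ∈ SL₂(ℤ), the block-diagonal matrix M_D = diag(D*, 1_n, D) belongs to Γ, where D* := JᵗDJ with J = [[−1,0],[0,1]]; and (ii) (one-cusp hypothesis) for every ℓ ∈ X there exists K ∈ Γ such that the ℚ-span of the first two columns of K equals the ℚ-span of the two columns of ℓ in ℚ^{n+4}. Here X := {ℓ ∈ Mat_{n+4,2}(ℤ) : ℓ is primitive and ℓᵗS₁ℓ = 0}, where ℓ is called primitive if there exists A ∈ Mat_{2,n+4}(ℤ) with Aℓ = 1₂. Let Γ_J := {γ ∈ Γ : γ maps the ℚ-span of e₁, e₂ to itself} (e₁, e₂ the first two standard basis vectors), and let GL₂(ℤ) act on X by right multiplication. Then the map γ ↦ γ⁻¹·(e₁ | e₂) (the matrix of the first two columns of γ⁻¹) induces a well-defined bijection from the set of right cosets Γ_J\Γ onto the orbit space X/GL₂(ℤ).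 -/
open Matrix

noncomputable section

/-- `S₁ = [[0,0,1],[0,S₀,0],[1,0,0]] ∈ Mat_{n+4}(ℤ)` where
`S₀ = [[0,0,1],[0,−S,0],[1,0,0]] ∈ Mat_{n+2}(ℤ)`. -/
def matS1Z (n : ℕ) (S : Matrix (Fin n) (Fin n) ℤ) : Matrix (Fin (n + 4)) (Fin (n + 4)) ℤ :=
  triBorder (triBorder (-S))

/-- `J = [[−1,0],[0,1]]`. -/
def Jmat : Matrix (Fin 2) (Fin 2) ℤ := !![-1, 0; 0, 1]

/-- `M_D = diag(D*, 1_n, D)` with `D* = Jᵀ D J`. -/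
def MDmat (n : ℕ) (D : Matrix (Fin 2) (Fin 2) ℤ) : Matrix (Fin (n + 4)) (Fin (n + 4)) ℤ :=
  Matrix.of fun i j =>
    if hij : i.val < 2 ∧ j.val < 2 then
      (Jmatᵀ * D * Jmat) ⟨i.val, hij.1⟩ ⟨j.val, hij.2⟩
    else if hij2 : n + 2 ≤ i.val ∧ n + 2 ≤ j.val then
      D ⟨i.val - (n + 2), by have := i.isLt; omega⟩ ⟨j.val - (n + 2), by have := j.isLt; omega⟩
    else if i = j then 1 else 0

/-- `X = {ℓ ∈ Mat_{n+4,2}(ℤ) : ℓ primitive, ℓᵀ S₁ ℓ = 0}`, where `ℓ` is primitive iff it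
admits an integral left inverse. -/
def Xset (n : ℕ) (S : Matrix (Fin n) (Fin n) ℤ) : Set (Matrix (Fin (n + 4)) (Fin 2) ℤ) :=
  {ℓ | (∃ A : Matrix (Fin 2) (Fin (n + 4)) ℤ, A * ℓ = 1) ∧ ℓᵀ * matS1Z n S * ℓ = 0}

/-- The `ℚ`-span of the two columns of an `(n+4)×2` integral matrix. -/
def spanPair (n : ℕ) (ℓ : Matrix (Fin (n + 4)) (Fin 2) ℤ) : Submodule ℚ (Fin (n + 4) → ℚ) :=
  Submodule.span ℚ {fun i => ((ℓ i 0 : ℤ) : ℚ), fun i => ((ℓ i 1 : ℤ) : ℚ)}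

/-- The `ℚ`-span of the first two columns of an `(n+4)×(n+4)` integral matrix. -/
def spanFirstTwo (n : ℕ) (K : Matrix (Fin (n + 4)) (Fin (n + 4)) ℤ) :
    Submodule ℚ (Fin (n + 4) → ℚ) :=
  Submodule.span ℚ {fun i => ((K i 0 : ℤ) : ℚ), fun i => ((K i 1 : ℤ) : ℚ)}

/-- The `ℚ`-span of the first two standard basis vectors `e₁, e₂`. -/
def Esp (n : ℕ) : Submodule ℚ (Fin (n + 4) → ℚ) :=
  Submodule.span ℚ {Pi.single (0 : Fin (n + 4)) (1 : ℚ), Pi.single (1 : Fin (n + 4)) (1 : ℚ)}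

/-- The parabolic subgroup `Γ_J = {γ ∈ Γ : γ maps the ℚ-span of e₁, e₂ to itself}`. -/
def GammaJ (n : ℕ) (Γ : Set (Matrix (Fin (n + 4)) (Fin (n + 4)) ℤ)) :
    Set (Matrix (Fin (n + 4)) (Fin (n + 4)) ℤ) :=
  {γ ∈ Γ | Submodule.map ((γ.map (Int.cast : ℤ → ℚ)).mulVecLin) (Esp n) = Esp n}

/-- The matrix of the first two columns of `γ⁻¹`. -/
def Fmap (n : ℕ) (γ : Matrix (Fin (n + 4)) (Fin (n + 4)) ℤ) : Matrix (Fin (n + 4)) (Fin 2) ℤ :=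
  Matrix.of fun i (j : Fin 2) => γ⁻¹ i ⟨j.val, by omega⟩


namespace Stmt5Aux

/-- Cast an integer matrix to a rational matrix. -/
def castQ {k m : ℕ} (M : Matrix (Fin k) (Fin m) ℤ) : Matrix (Fin k) (Fin m) ℚ :=
  M.map (Int.cast : ℤ → ℚ)

lemma castQ_def {k m : ℕ} (M : Matrix (Fin k) (Fin m) ℤ) :
    M.map (Int.cast : ℤ → ℚ) = castQ M := rfl

lemma castQ_mul {k m l : ℕ} (M : Matrix (Fin k) (Fin m) ℤ) (N : Matrix (Fin m) (Fin l) ℤ) :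
    castQ (M * N) = castQ M * castQ N := by
  simpa [castQ] using Matrix.map_mul (L := M) (M := N) (f := Int.castRingHom ℚ)

lemma castQ_one {k : ℕ} : castQ (1 : Matrix (Fin k) (Fin k) ℤ) = 1 := by
  simp [castQ]

/-- The `j`-th column of an integer matrix, as a rational vector. -/
def colQ {k m : ℕ} (M : Matrix (Fin k) (Fin m) ℤ) (j : Fin m) : Fin k → ℚ :=
  fun i => ((M i j : ℤ) : ℚ)

lemma colQ_eq_mulVec {k m : ℕ} (M : Matrix (Fin k) (Fin m) ℤ) (j : Fin m) :
    colQ M j = (castQ M) *ᵥ Pi.single j 1 := by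
  funext i
  simp [colQ, castQ, Matrix.mulVec_single]

lemma mul_col {k m l : ℕ} (M : Matrix (Fin k) (Fin m) ℤ) (N : Matrix (Fin m) (Fin l) ℤ)
    (j : Fin l) : colQ (M * N) j = (castQ M) *ᵥ colQ N j := by
  funext i
  simp [colQ, castQ, Matrix.mulVec, Matrix.mul_apply, dotProduct]

lemma spanPair_eq (n : ℕ) (ℓ : Matrix (Fin (n + 4)) (Fin 2) ℤ) :
    spanPair n ℓ = Submodule.span ℚ {colQ ℓ 0, colQ ℓ 1} := rfl

lemma colQ_mem_spanPair (n : ℕ) (ℓ : Matrix (Fin (n + 4)) (Fin 2) ℤ) (j : Fin 2) :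
    colQ ℓ j ∈ spanPair n ℓ := by
  fin_cases j
  · exact Submodule.subset_span (Set.mem_insert _ _)
  · exact Submodule.subset_span (Set.mem_insert_of_mem _ rfl)

lemma fix_of_span_le (n : ℕ) (ℓ m : Matrix (Fin (n + 4)) (Fin 2) ℤ)
    (A : Matrix (Fin 2) (Fin (n + 4)) ℤ) (hA : A * m = 1)
    (hle : spanPair n ℓ ≤ spanPair n m) : m * (A * ℓ) = ℓ := by
  have hAm : castQ A * castQ m = 1 := by rw [← castQ_mul, hA, castQ_one]
  set T : (Fin (n + 4) → ℚ) →ₗ[ℚ] (Fin (n + 4) → ℚ) := (castQ m * castQ A).mulVecLin with hT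
  have hfix : ∀ v ∈ spanPair n m, T v = v := by
    intro v hv
    have hsub : spanPair n m ≤ LinearMap.eqLocus T LinearMap.id := by
      rw [spanPair_eq]
      apply Submodule.span_le.2
      rintro x (rfl | rfl) <;>
      · show T _ = _
        rw [colQ_eq_mulVec, hT]
        show (castQ m * castQ A) *ᵥ (castQ m *ᵥ Pi.single _ 1) = castQ m *ᵥ Pi.single _ 1
        rw [Matrix.mulVec_mulVec, Matrix.mul_assoc, hAm, Matrix.mul_one]
    exact LinearMap.mem_eqLocus.1 (hsub hv)
  ext i j
  have h1 : T (colQ ℓ j) = colQ ℓ j := hfix _ (hle (colQ_mem_spanPair n ℓ j))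
  have h2 : colQ (m * (A * ℓ)) j = T (colQ ℓ j) := by
    rw [hT]
    show colQ (m * (A * ℓ)) j = (castQ m * castQ A) *ᵥ colQ ℓ j
    rw [mul_col, mul_col, Matrix.mulVec_mulVec]
  have h3 := congrFun (h2.trans h1) i
  simp only [colQ] at h3
  exact_mod_cast h3

lemma exists_unit_of_span_eq (n : ℕ) (ℓ m : Matrix (Fin (n + 4)) (Fin 2) ℤ)
    (hℓ : ∃ B : Matrix (Fin 2) (Fin (n + 4)) ℤ, B * ℓ = 1)
    (hm : ∃ A : Matrix (Fin 2) (Fin (n + 4)) ℤ, A * m = 1)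
    (hsp : spanPair n ℓ = spanPair n m) :
    ∃ U : Matrix (Fin 2) (Fin 2) ℤ, IsUnit U.det ∧ ℓ = m * U := by
  obtain ⟨B, hB⟩ := hℓ
  obtain ⟨A, hA⟩ := hm
  have h1 : m * (A * ℓ) = ℓ := fix_of_span_le n ℓ m A hA hsp.le
  have h2 : ℓ * (B * m) = m := fix_of_span_le n m ℓ B hB hsp.ge
  refine ⟨A * ℓ, ?_, h1.symm⟩
  have hVU : (B * m) * (A * ℓ) = 1 := by
    have h3 : ℓ * ((B * m) * (A * ℓ)) = ℓ := by
      rw [← Matrix.mul_assoc, h2, h1]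
    have h4 := congrArg (fun M => B * M) h3
    simpa [← Matrix.mul_assoc, hB] using h4
  have h5 := congrArg Matrix.det hVU
  rw [Matrix.det_mul, Matrix.det_one] at h5
  exact IsUnit.of_mul_eq_one _ ((mul_comm _ _).trans h5)

lemma spanPair_mul_le (n : ℕ) (m : Matrix (Fin (n + 4)) (Fin 2) ℤ)
    (U : Matrix (Fin 2) (Fin 2) ℤ) :
    spanPair n (m * U) ≤ spanPair n m := by
  rw [spanPair_eq n (m * U), spanPair_eq n m]
  apply Submodule.span_le.2
  rintro x (rfl | rfl)
  · refine Submodule.mem_span_pair.2 ⟨((U 0 0 : ℤ) : ℚ), ((U 1 0 : ℤ) : ℚ), ?_⟩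
    funext i
    simp [colQ, Matrix.mul_apply, Fin.sum_univ_two]
    ring
  · refine Submodule.mem_span_pair.2 ⟨((U 0 1 : ℤ) : ℚ), ((U 1 1 : ℤ) : ℚ), ?_⟩
    funext i
    simp [colQ, Matrix.mul_apply, Fin.sum_univ_two]
    ring

lemma spanPair_mul_unit (n : ℕ) (m : Matrix (Fin (n + 4)) (Fin 2) ℤ)
    (U : Matrix (Fin 2) (Fin 2) ℤ) (hU : IsUnit U.det) :
    spanPair n (m * U) = spanPair n m := by
  refine le_antisymm (spanPair_mul_le n m U) ?_
  have h : m * U * U⁻¹ = m := by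
    rw [Matrix.mul_assoc, Matrix.mul_nonsing_inv U hU, Matrix.mul_one]
  conv_lhs => rw [← h]
  exact spanPair_mul_le n (m * U) U⁻¹

lemma map_esp (n : ℕ) (M : Matrix (Fin (n + 4)) (Fin (n + 4)) ℤ) :
    Submodule.map ((M.map (Int.cast : ℤ → ℚ)).mulVecLin) (Esp n) = spanFirstTwo n M := by
  rw [Esp, Submodule.map_span, Set.image_pair, spanFirstTwo]
  have e0 : (M.map (Int.cast : ℤ → ℚ)).mulVecLin (Pi.single (0 : Fin (n + 4)) (1 : ℚ)) =
      fun i => ((M i 0 : ℤ) : ℚ) := by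
    funext i
    simp [Matrix.mulVecLin_apply, Matrix.mulVec_single]
  have e1 : (M.map (Int.cast : ℤ → ℚ)).mulVecLin (Pi.single (1 : Fin (n + 4)) (1 : ℚ)) =
      fun i => ((M i 1 : ℤ) : ℚ) := by
    funext i
    simp [Matrix.mulVecLin_apply, Matrix.mulVec_single]
  rw [e0, e1]

lemma map_map_one {k : ℕ} (g h : Matrix (Fin k) (Fin k) ℤ) (hgh : g * h = 1)
    (W : Submodule ℚ (Fin k → ℚ)) :
    Submodule.map ((g.map (Int.cast : ℤ → ℚ)).mulVecLin)
      (Submodule.map ((h.map (Int.cast : ℤ → ℚ)).mulVecLin) W) = W := by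
  rw [← Submodule.map_comp, ← Matrix.mulVecLin_mul, castQ_def, castQ_def, ← castQ_mul, hgh,
    castQ_one, Matrix.mulVecLin_one, Submodule.map_id]

lemma Fmap_apply (n : ℕ) (γ : Matrix (Fin (n + 4)) (Fin (n + 4)) ℤ) (i : Fin (n + 4))
    (j : Fin 2) (jj : Fin (n + 4)) (h : (jj : ℕ) = (j : ℕ)) : Fmap n γ i j = γ⁻¹ i jj := by
  simp only [Fmap, Matrix.of_apply]
  have : jj = ⟨(j : ℕ), by omega⟩ := Fin.eq_of_val_eq h
  rw [this]

lemma spanPair_Fmap (n : ℕ) (γ : Matrix (Fin (n + 4)) (Fin (n + 4)) ℤ) :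
    spanPair n (Fmap n γ) = spanFirstTwo n γ⁻¹ := by
  have h0 : ∀ i, Fmap n γ i 0 = γ⁻¹ i 0 := fun i => Fmap_apply n γ i 0 0 (by simp)
  have h1 : ∀ i, Fmap n γ i 1 = γ⁻¹ i 1 := fun i => Fmap_apply n γ i 1 1 (by simp)
  simp only [spanPair, spanFirstTwo, h0, h1]

lemma matS1Z_zero (n : ℕ) (S : Matrix (Fin n) (Fin n) ℤ) (j k : Fin (n + 4))
    (hj : (j : ℕ) < 2) (hk : (k : ℕ) < 2) : matS1Z n S j k = 0 := by
  unfold matS1Z triBorder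
  simp only [Matrix.of_apply]
  split_ifs <;> first | rfl | omega

end Stmt5Aux

/-- **The cosets `Γ_J\Γ` biject with the orbits `X/GL₂(ℤ)` (one-cusp case).**
Under hypotheses (i) (`M_D ∈ Γ` for all `D ∈ SL₂(ℤ)`) and (ii) (the one-cusp
hypothesis), the map `γ ↦ γ⁻¹·(e₁|e₂)` lands in `X`, two elements of `Γ` lie in the
same right coset of `Γ_J` iff their images lie in the same `GL₂(ℤ)`-orbit (well
definedness and injectivity), and every `GL₂(ℤ)`-orbit in `X` is hit (surjectivity). -/
theorem stmt5 (n : ℕ) (hn : 1 ≤ n) (S : Matrix (Fin n) (Fin n) ℤ)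
    (hSsymm : S.IsSymm) (hSpos : (S.map (Int.cast : ℤ → ℝ)).PosDef)
    (hSeven : ∀ x : Fin n → ℤ, 2 ∣ x ⬝ᵥ S.mulVec x)
    (Γ : Set (Matrix (Fin (n + 4)) (Fin (n + 4)) ℤ))
    (hΓsub : ∀ g ∈ Γ, g.det = 1 ∧ gᵀ * matS1Z n S * g = matS1Z n S)
    (hΓone : (1 : Matrix (Fin (n + 4)) (Fin (n + 4)) ℤ) ∈ Γ)
    (hΓmul : ∀ g ∈ Γ, ∀ h ∈ Γ, g * h ∈ Γ)
    (hΓinv : ∀ g ∈ Γ, ∃ h ∈ Γ, g * h = 1 ∧ h * g = 1)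
    (hMD : ∀ D : Matrix (Fin 2) (Fin 2) ℤ, D.det = 1 → MDmat n D ∈ Γ)
    (hcusp : ∀ ℓ ∈ Xset n S, ∃ K ∈ Γ, spanFirstTwo n K = spanPair n ℓ) :
    (∀ γ ∈ Γ, Fmap n γ ∈ Xset n S) ∧
    (∀ γ ∈ Γ, ∀ δ ∈ Γ,
      ((∃ p ∈ GammaJ n Γ, γ = p * δ) ↔
        ∃ U : Matrix (Fin 2) (Fin 2) ℤ, IsUnit U.det ∧ Fmap n γ = Fmap n δ * U)) ∧
    (∀ ℓ ∈ Xset n S, ∃ γ ∈ Γ, ∃ U : Matrix (Fin 2) (Fin 2) ℤ,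
      IsUnit U.det ∧ ℓ = Fmap n γ * U) := by
  classical
  have part1 : ∀ γ ∈ Γ, Fmap n γ ∈ Xset n S := by
    intro γ hγ
    obtain ⟨h, hhΓ, hgh, hhg⟩ := hΓinv γ hγ
    have hinv : γ⁻¹ = h := inv_eq_right_inv hgh
    constructor
    · refine ⟨Matrix.of (fun (j : Fin 2) (i : Fin (n + 4)) => γ ⟨(j : ℕ), by omega⟩ i), ?_⟩
      ext j k
      have hone : (γ * γ⁻¹) (⟨(j : ℕ), by omega⟩ : Fin (n + 4)) ⟨(k : ℕ), by omega⟩ =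
          (1 : Matrix (Fin (n + 4)) (Fin (n + 4)) ℤ) ⟨(j : ℕ), by omega⟩ ⟨(k : ℕ), by omega⟩ := by
        rw [hinv, hgh]
      simp only [Matrix.mul_apply] at hone
      simp only [Matrix.mul_apply, Matrix.of_apply, Fmap]
      rw [hone]
      simp [Matrix.one_apply, Fin.ext_iff]
    · have hS1 := (hΓsub γ hγ).2
      have hSinv : (γ⁻¹)ᵀ * matS1Z n S * γ⁻¹ = matS1Z n S := by
        have h2 : (γ⁻¹)ᵀ * (γᵀ * matS1Z n S * γ) * γ⁻¹ = matS1Z n S := by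
          rw [hinv]
          have h3 : (γ * h)ᵀ * matS1Z n S * (γ * h) = matS1Z n S := by
            rw [hgh]; simp
          calc hᵀ * (γᵀ * matS1Z n S * γ) * h
              = (γ * h)ᵀ * matS1Z n S * (γ * h) := by
                simp only [Matrix.transpose_mul, Matrix.mul_assoc]
            _ = matS1Z n S := h3
        rw [hS1] at h2
        exact h2
      ext j k
      have key : ((γ⁻¹)ᵀ * matS1Z n S * γ⁻¹) (⟨(j : ℕ), by omega⟩ : Fin (n + 4))
          ⟨(k : ℕ), by omega⟩ = 0 := by
        rw [hSinv]
        exact Stmt5Aux.matS1Z_zero n S _ _ j.isLt k.isLt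
      simp only [Matrix.mul_apply, Matrix.transpose_apply] at key
      simp only [Matrix.mul_apply, Matrix.transpose_apply, Matrix.of_apply, Fmap,
        Matrix.zero_apply]
      exact key
  have part2 : ∀ γ ∈ Γ, ∀ δ ∈ Γ,
      ((∃ p ∈ GammaJ n Γ, γ = p * δ) ↔
        ∃ U : Matrix (Fin 2) (Fin 2) ℤ, IsUnit U.det ∧ Fmap n γ = Fmap n δ * U) := by
    intro γ hγ δ hδ
    constructor
    · rintro ⟨p, ⟨hpΓ, hpE⟩, rfl⟩
      obtain ⟨q, hqΓ, hpq, hqp⟩ := hΓinv p hpΓ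
      have hpinv : p⁻¹ = q := inv_eq_right_inv hpq
      have hsp : spanPair n (Fmap n (p * δ)) = spanPair n (Fmap n δ) := by
        rw [Stmt5Aux.spanPair_Fmap, Stmt5Aux.spanPair_Fmap, ← Stmt5Aux.map_esp,
          ← Stmt5Aux.map_esp, Matrix.mul_inv_rev]
        rw [Stmt5Aux.castQ_def (δ⁻¹ * p⁻¹), Stmt5Aux.castQ_mul, Matrix.mulVecLin_mul,
          Submodule.map_comp, ← Stmt5Aux.castQ_def, ← Stmt5Aux.castQ_def]
        have hfix : Submodule.map ((p⁻¹.map (Int.cast : ℤ → ℚ)).mulVecLin) (Esp n) = Esp n := by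
          conv_lhs => rw [← hpE]
          exact Stmt5Aux.map_map_one p⁻¹ p (by rw [hpinv]; exact hqp) (Esp n)
        rw [hfix]
      have h1 := part1 (p * δ) (hΓmul p hpΓ δ hδ)
      have h2 := part1 δ hδ
      exact Stmt5Aux.exists_unit_of_span_eq n _ _ h1.1 h2.1 hsp
    · rintro ⟨U, hU, hFU⟩
      obtain ⟨d, hdΓ, hδd, hdδ⟩ := hΓinv δ hδ
      obtain ⟨c, hcΓ, hγc, hcγ⟩ := hΓinv γ hγ
      have hδinv : δ⁻¹ = d := inv_eq_right_inv hδd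
      have hγinv : γ⁻¹ = c := inv_eq_right_inv hγc
      refine ⟨γ * d, ⟨hΓmul γ hγ d hdΓ, ?_⟩,
        by rw [Matrix.mul_assoc, hdδ, Matrix.mul_one]⟩
      have hsp : spanPair n (Fmap n γ) = spanPair n (Fmap n δ) := by
        rw [hFU]; exact Stmt5Aux.spanPair_mul_unit n _ U hU
      have hd : Submodule.map ((d.map (Int.cast : ℤ → ℚ)).mulVecLin) (Esp n) =
          Submodule.map ((γ⁻¹.map (Int.cast : ℤ → ℚ)).mulVecLin) (Esp n) := by
        rw [← hδinv, Stmt5Aux.map_esp, Stmt5Aux.map_esp, ← Stmt5Aux.spanPair_Fmap,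
          ← Stmt5Aux.spanPair_Fmap, hsp]
      show Submodule.map (((γ * d).map (Int.cast : ℤ → ℚ)).mulVecLin) (Esp n) = Esp n
      rw [Stmt5Aux.castQ_def (γ * d), Stmt5Aux.castQ_mul, Matrix.mulVecLin_mul,
        Submodule.map_comp, ← Stmt5Aux.castQ_def, ← Stmt5Aux.castQ_def, hd]
      exact Stmt5Aux.map_map_one γ γ⁻¹ (by rw [hγinv]; exact hγc) (Esp n)
  have part3 : ∀ ℓ ∈ Xset n S, ∃ γ ∈ Γ, ∃ U : Matrix (Fin 2) (Fin 2) ℤ,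
      IsUnit U.det ∧ ℓ = Fmap n γ * U := by
    intro ℓ hℓ
    obtain ⟨K, hKΓ, hKspan⟩ := hcusp ℓ hℓ
    obtain ⟨K', hK'Γ, hKK', hK'K⟩ := hΓinv K hKΓ
    have hKinv : K'⁻¹ = K := inv_eq_right_inv hK'K
    have hspan : spanPair n ℓ = spanPair n (Fmap n K') := by
      rw [Stmt5Aux.spanPair_Fmap, hKinv, hKspan]
    obtain ⟨U, hU, hℓU⟩ :=
      Stmt5Aux.exists_unit_of_span_eq n ℓ (Fmap n K') hℓ.1 (part1 K' hK'Γ).1 hspan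
    exact ⟨K', hK'Γ, U, hU, hℓU⟩
  exact ⟨part1, part2, part3⟩

end
end

section
/- Let M ∈ GL_{n+4}(ℤ) satisfy MᵗS₁M = S₁, let R ∈ Mat_{n+4}(ℝ) be symmetric positive definite, let X ∈ Mat₂(ℝ) be symmetric, and let Y ∈ Mat₂(ℝ) be symmetric positive definite. Then ∑_{ℓ ∈ Mat_{n+4,2}(ℤ)} exp(πi·tr(ℓᵗS₁ℓ·X) − π·tr(ℓᵗ(M⁻¹)ᵗRM⁻¹ℓ·Y)) = ∑_{ℓ ∈ Mat_{n+4,2}(ℤ)} exp(πi·tr(ℓᵗS₁ℓ·X) − π·tr(ℓᵗRℓ·Y)), both sums being absolutely convergent. (This expresses the invariance Θ(Z, M⟨W⟩) = Θ(Z, W) of the theta series under the orthogonal modular group, using R_{M⟨W⟩} = R_W[M⁻¹].) -/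
open Matrix

noncomputable section

/-- The summand `exp(πi·tr(ℓᵀS₁ℓ·X) − π·tr(ℓᵀRℓ·Y))` of the theta series. -/
def thetaTerm (n : ℕ) (S1 R : Matrix (Fin (n + 4)) (Fin (n + 4)) ℝ)
    (X Y : Matrix (Fin 2) (Fin 2) ℝ) (ℓ : Matrix (Fin (n + 4)) (Fin 2) ℤ) : ℂ :=
  Complex.exp
    ((Real.pi : ℂ) * Complex.I *
        ((((ℓ.map (Int.cast : ℤ → ℝ))ᵀ * S1 * ℓ.map (Int.cast : ℤ → ℝ) * X).trace : ℝ) : ℂ) -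
      ((Real.pi * (((ℓ.map (Int.cast : ℤ → ℝ))ᵀ * R * ℓ.map (Int.cast : ℤ → ℝ) * Y).trace) : ℝ) : ℂ))

set_option maxHeartbeats 1000000

lemma map_mul_int {a b c : Type*} [Fintype b] (A : Matrix a b ℤ) (B : Matrix b c ℤ) :
    (A * B).map (Int.cast : ℤ → ℝ) = A.map (Int.cast : ℤ → ℝ) * B.map (Int.cast : ℤ → ℝ) := by
  ext i j
  simp [Matrix.mul_apply, Matrix.map_apply]

lemma aux_summable_int {c : ℝ} (hc : 0 < c) :
    Summable fun a : ℤ => Real.exp (-c * (a : ℝ) ^ 2) := by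
  have hnat : Summable fun n : ℕ => Real.exp (-c * (n : ℝ) ^ 2) := by
    have hgeo : Summable fun n : ℕ => Real.exp (-c) ^ n :=
      summable_geometric_of_lt_one (Real.exp_nonneg _)
        (by rw [Real.exp_lt_one_iff]; linarith)
    refine Summable.of_nonneg_of_le (fun n => (Real.exp_pos _).le) (fun n => ?_) hgeo
    rw [← Real.exp_nat_mul]
    apply Real.exp_le_exp.mpr
    have h1 : (n : ℝ) ≤ (n : ℝ) ^ 2 := by
      rcases Nat.eq_zero_or_pos n with h | h
      · simp [h]
      · have : (1 : ℝ) ≤ (n : ℝ) := by exact_mod_cast h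
        nlinarith
    nlinarith
  apply Summable.of_nat_of_neg <;> simpa using hnat


lemma aux_summable_pi {α : Type*} {f : α → ℝ} (hf : Summable f) (hnn : ∀ a, 0 ≤ f a) :
    ∀ N : ℕ, Summable fun x : Fin N → α => ∏ i, f (x i) := by
  intro N
  induction N with
  | zero =>
    haveI : Unique (Fin 0 → α) := ⟨⟨fun i => i.elim0⟩, fun x => funext fun i => i.elim0⟩
    exact .of_finite
  | succ N ih =>
    have hprod : Summable fun p : α × (Fin N → α) => f p.1 * ∏ i, f (p.2 i) :=
      Summable.mul_of_nonneg (f := f) (g := fun y : Fin N → α => ∏ i, f (y i)) hf ih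
        (fun a => hnn a) (fun y => Finset.prod_nonneg fun i _ => hnn _)
    refine (Equiv.summable_iff (Fin.consEquiv fun _ : Fin (N + 1) => α)).mp ?_
    have : ((fun x : Fin (N + 1) → α => ∏ i, f (x i)) ∘ (Fin.consEquiv fun _ => α)) =
        fun p : α × (Fin N → α) => f p.1 * ∏ i, f (p.2 i) := by
      funext p
      simp [Fin.consEquiv, Fin.prod_univ_succ]
    rw [this]
    exact hprod

lemma aux_summable_matrix (m : ℕ) {c : ℝ} (hc : 0 < c) :
    Summable fun ℓ : Matrix (Fin m) (Fin 2) ℤ =>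
      Real.exp (-c * ∑ i, ∑ j, ((ℓ i j : ℝ)) ^ 2) := by
  have h2 : Summable fun y : Fin 2 → ℤ => ∏ j, Real.exp (-c * ((y j : ℝ)) ^ 2) :=
    aux_summable_pi (aux_summable_int hc) (fun a => (Real.exp_pos _).le) 2
  have hm : Summable fun x : Fin m → Fin 2 → ℤ =>
      ∏ i, ∏ j, Real.exp (-c * ((x i j : ℝ)) ^ 2) :=
    aux_summable_pi h2 (fun y => Finset.prod_nonneg fun j _ => (Real.exp_pos _).le) m
  refine hm.congr fun x => ?_
  rw [Finset.mul_sum]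
  rw [Real.exp_sum]
  refine Finset.prod_congr rfl fun i _ => ?_
  rw [Finset.mul_sum, Real.exp_sum]

lemma trace_expand {m k : ℕ} (R : Matrix (Fin m) (Fin m) ℝ) (B : Matrix (Fin m) (Fin k) ℝ) :
    (Bᵀ * R * B).trace = ∑ j, (fun i => B i j) ⬝ᵥ R *ᵥ (fun i => B i j) := by
  simp only [Matrix.trace, Matrix.diag, Matrix.mul_apply, Matrix.transpose_apply,
    dotProduct, Matrix.mulVec, Finset.sum_mul, Finset.mul_sum]
  refine Finset.sum_congr rfl fun j _ => ?_
  rw [Finset.sum_comm]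
  refine Finset.sum_congr rfl fun a _ => Finset.sum_congr rfl fun b _ => by ring

open scoped MatrixOrder in
lemma trace_pos_aux {m k : ℕ} {R : Matrix (Fin m) (Fin m) ℝ} (hR : R.PosDef)
    {Y : Matrix (Fin k) (Fin k) ℝ} (hY : Y.PosDef) (A : Matrix (Fin m) (Fin k) ℝ) :
    0 ≤ (Aᵀ * R * A * Y).trace ∧ (A ≠ 0 → 0 < (Aᵀ * R * A * Y).trace) := by
  classical
  set C := CFC.sqrt Y with hCdef
  have hCH : Cᴴ = C := (CFC.sqrt_nonneg Y).posSemidef.1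
  have hCsymm : Cᵀ = C := by rw [← conjTranspose_eq_transpose_of_trivial, hCH]
  have hCC : C * C = Y := CFC.sqrt_mul_sqrt_self Y hY.posSemidef.nonneg
  have hdet : IsUnit C.det := by
    have hdY : (0 : ℝ) < Y.det := hY.det_pos
    have hsq : C.det * C.det = Y.det := by rw [← det_mul, hCC]
    refine isUnit_iff_ne_zero.mpr fun h => ?_
    rw [h, mul_zero] at hsq
    rw [← hsq] at hdY
    exact lt_irrefl 0 hdY
  set B := A * C with hBdef
  have key : (Aᵀ * R * A * Y).trace = (Bᵀ * R * B).trace := by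
    have h1 : Bᵀ * R * B = C * (Aᵀ * R * A) * C := by
      rw [hBdef, transpose_mul, hCsymm]
      simp only [Matrix.mul_assoc]
    rw [h1, ← hCC, ← Matrix.mul_assoc, Matrix.trace_mul_cycle]
  have hterm : ∀ j, 0 ≤ (fun i => B i j) ⬝ᵥ R *ᵥ (fun i => B i j) := by
    intro j
    have := hR.posSemidef.dotProduct_mulVec_nonneg (fun i => B i j)
    simpa using this
  constructor
  · rw [key, trace_expand]
    exact Finset.sum_nonneg fun j _ => hterm j
  · intro hA
    have hB : B ≠ 0 := by
      intro h
      apply hA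
      have : A = B * C⁻¹ := by
        rw [hBdef, Matrix.mul_assoc, Matrix.mul_nonsing_inv _ hdet, Matrix.mul_one]
      rw [this, h, Matrix.zero_mul]
    obtain ⟨i0, j0, hij⟩ : ∃ i j, B i j ≠ 0 := by
      by_contra h
      push_neg at h
      exact hB (by ext i j; simpa using h i j)
    have hcol : (fun i => B i j0) ≠ 0 := by
      intro h
      exact hij (by simpa using congrFun h i0)
    have hpos : 0 < (fun i => B i j0) ⬝ᵥ R *ᵥ (fun i => B i j0) := by
      have := hR.dotProduct_mulVec_pos hcol
      simpa using this
    rw [key, trace_expand]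
    exact Finset.sum_pos' (fun j _ => hterm j) ⟨j0, Finset.mem_univ _, hpos⟩

lemma quad_lower {m k : ℕ} [NeZero m] [NeZero k] {R : Matrix (Fin m) (Fin m) ℝ} (hR : R.PosDef)
    {Y : Matrix (Fin k) (Fin k) ℝ} (hY : Y.PosDef) :
    ∃ c > 0, ∀ A : Matrix (Fin m) (Fin k) ℝ,
      c * (∑ i, ∑ j, A i j ^ 2) ≤ (Aᵀ * R * A * Y).trace := by
  classical
  set g : (Fin m → Fin k → ℝ) → ℝ :=
    fun x => ((Matrix.of x)ᵀ * R * Matrix.of x * Y).trace with hgdef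
  have hof : Continuous fun x : Fin m → Fin k → ℝ => (Matrix.of x : Matrix (Fin m) (Fin k) ℝ) :=
    continuous_id
  have hg : Continuous g :=
    (((hof.matrix_transpose.matrix_mul continuous_const).matrix_mul hof).matrix_mul
      continuous_const).matrix_trace
  have hq : Continuous fun x : Fin m → Fin k → ℝ => ∑ i, ∑ j, x i j ^ 2 := by
    refine continuous_finset_sum _ fun i _ => continuous_finset_sum _ fun j _ => ?_
    exact ((continuous_apply j).comp (continuous_apply i)).pow 2
  set K : Set (Fin m → Fin k → ℝ) := {x | ∑ i, ∑ j, x i j ^ 2 = 1} with hKdef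
  have hKclosed : IsClosed K := isClosed_eq hq continuous_const
  have hKsub : K ⊆ Metric.closedBall 0 1 := by
    intro x hx
    rw [Metric.mem_closedBall, dist_zero_right]
    refine (pi_norm_le_iff_of_nonneg zero_le_one).mpr fun i => ?_
    refine (pi_norm_le_iff_of_nonneg zero_le_one).mpr fun j => ?_
    rw [Real.norm_eq_abs]
    have hb : x i j ^ 2 ≤ 1 := by
      calc x i j ^ 2 ≤ ∑ j', x i j' ^ 2 :=
            Finset.single_le_sum (f := fun j' => x i j' ^ 2)
              (fun j' _ => sq_nonneg _) (Finset.mem_univ j)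
        _ ≤ ∑ i', ∑ j', x i' j' ^ 2 :=
            Finset.single_le_sum (f := fun i' => ∑ j', x i' j' ^ 2)
              (fun i' _ => Finset.sum_nonneg fun j' _ => sq_nonneg _) (Finset.mem_univ i)
        _ = 1 := hx
    nlinarith [sq_abs (x i j), abs_nonneg (x i j)]
  have hKcompact : IsCompact K :=
    (isCompact_closedBall (0 : Fin m → Fin k → ℝ) 1).of_isClosed_subset hKclosed hKsub
  have hKne : K.Nonempty := by
    refine ⟨fun i j => if i = 0 ∧ j = 0 then 1 else 0, ?_⟩
    have : ∀ i : Fin m, (∑ j : Fin k, (if i = 0 ∧ j = 0 then (1:ℝ) else 0) ^ 2)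
        = if i = 0 then 1 else 0 := by
      intro i
      by_cases hi : i = 0 <;> simp [hi]
    simp only [hKdef, Set.mem_setOf_eq, this]
    simp
  obtain ⟨z, hzK, hz⟩ := hKcompact.exists_isMinOn hKne hg.continuousOn
  have hzpos : 0 < g z := by
    have hzne : Matrix.of z ≠ 0 := by
      intro h
      have : z = 0 := h
      rw [this] at hzK
      simp [hKdef] at hzK
    exact (trace_pos_aux hR hY (Matrix.of z)).2 hzne
  refine ⟨g z, hzpos, fun A => ?_⟩
  set s := ∑ i, ∑ j, A i j ^ 2 with hsdef
  have hsnn : 0 ≤ s := Finset.sum_nonneg fun i _ => Finset.sum_nonneg fun j _ => sq_nonneg _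
  rcases eq_or_lt_of_le hsnn with hs0 | hs
  · rw [← hs0, mul_zero]
    exact (trace_pos_aux hR hY A).1
  · set r := Real.sqrt s with hrdef
    have hr : 0 < r := Real.sqrt_pos.mpr hs
    have hr2 : r ^ 2 = s := Real.sq_sqrt hsnn
    set y : Fin m → Fin k → ℝ := fun i j => r⁻¹ * A i j with hydef
    have hyK : y ∈ K := by
      simp only [hKdef, Set.mem_setOf_eq, hydef, mul_pow]
      simp only [← Finset.mul_sum]
      rw [inv_pow, ← hsdef, ← hr2]
      field_simp
    have hgy : g y = r⁻¹ ^ 2 * g A := by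
      have hofy : (Matrix.of y : Matrix (Fin m) (Fin k) ℝ) = r⁻¹ • A := by
        ext i j; simp [hydef, Matrix.smul_apply, smul_eq_mul]
      simp only [hgdef, hofy, Matrix.transpose_smul, Matrix.smul_mul, Matrix.mul_smul,
        Matrix.trace_smul, smul_eq_mul]
      ring_nf
      rfl
    have hineq : g z ≤ g y := isMinOn_iff.mp hz y hyK
    rw [hgy] at hineq
    have : g z * s ≤ g A := by
      have h2 : r⁻¹ ^ 2 = s⁻¹ := by
        rw [← hr2]; field_simp
      rw [h2] at hineq
      calc g z * s ≤ s⁻¹ * g A * s := by nlinarith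
        _ = g A := by field_simp
    exact this
lemma summable_theta (n : ℕ) (S1 : Matrix (Fin (n + 4)) (Fin (n + 4)) ℝ)
    {R : Matrix (Fin (n + 4)) (Fin (n + 4)) ℝ} (hR : R.PosDef)
    (X : Matrix (Fin 2) (Fin 2) ℝ) {Y : Matrix (Fin 2) (Fin 2) ℝ} (hY : Y.PosDef) :
    Summable (thetaTerm n S1 R X Y) := by
  obtain ⟨c, hc, hbound⟩ := quad_lower hR hY
  have hsum := aux_summable_matrix (n + 4) (mul_pos Real.pi_pos hc)
  refine Summable.of_norm_bounded hsum fun ℓ => ?_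
  have habs : ‖thetaTerm n S1 R X Y ℓ‖ =
      Real.exp (-(Real.pi *
        ((ℓ.map (Int.cast : ℤ → ℝ))ᵀ * R * ℓ.map (Int.cast : ℤ → ℝ) * Y).trace)) := by
    rw [thetaTerm, Complex.norm_exp]
    congr 1
    simp [Complex.sub_re, Complex.mul_re, Complex.ofReal_re, Complex.ofReal_im,
      Complex.I_re, Complex.I_im]
  rw [habs]
  apply Real.exp_le_exp.mpr
  have hle := hbound (ℓ.map (Int.cast : ℤ → ℝ))
  have hA : ∑ i, ∑ j, (ℓ.map (Int.cast : ℤ → ℝ)) i j ^ 2 = ∑ i, ∑ j, ((ℓ i j : ℝ)) ^ 2 := by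
    simp [Matrix.map_apply]
  rw [hA] at hle
  nlinarith [Real.pi_pos, Finset.sum_nonneg (fun i (_ : i ∈ Finset.univ) =>
    Finset.sum_nonneg fun j (_ : j ∈ Finset.univ) => sq_nonneg ((ℓ i j : ℝ)))]

/-- **Invariance of the theta series under the orthogonal modular group.**
For `M ∈ GL_{n+4}(ℤ)` with `Mᵀ S₁ M = S₁`, `R` symmetric positive definite,
`X` symmetric and `Y` symmetric positive definite, both theta series converge
absolutely and
`∑_ℓ exp(πi·tr(S₁[ℓ]X) − π·tr(R[M⁻¹][ℓ]Y)) = ∑_ℓ exp(πi·tr(S₁[ℓ]X) − π·tr(R[ℓ]Y))`,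
expressing `Θ(Z, M⟨W⟩) = Θ(Z, W)` via `R_{M⟨W⟩} = R_W[M⁻¹]`. -/
theorem stmt11 (n : ℕ) (hn : 1 ≤ n) (S : Matrix (Fin n) (Fin n) ℤ)
    (hSsymm : S.IsSymm) (hSpos : (S.map (Int.cast : ℤ → ℝ)).PosDef)
    (hSeven : ∀ x : Fin n → ℤ, 2 ∣ x ⬝ᵥ S.mulVec x)
    (M : Matrix (Fin (n + 4)) (Fin (n + 4)) ℤ) (hMunit : IsUnit M.det)
    (hM : (M.map (Int.cast : ℤ → ℝ))ᵀ * matS1 n (S.map (Int.cast : ℤ → ℝ)) *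
      M.map (Int.cast : ℤ → ℝ) = matS1 n (S.map (Int.cast : ℤ → ℝ)))
    (R : Matrix (Fin (n + 4)) (Fin (n + 4)) ℝ) (hRsymm : R.IsSymm) (hRpos : R.PosDef)
    (X : Matrix (Fin 2) (Fin 2) ℝ) (hX : X.IsSymm)
    (Y : Matrix (Fin 2) (Fin 2) ℝ) (hYsymm : Y.IsSymm) (hYpos : Y.PosDef) :
    Summable (thetaTerm n (matS1 n (S.map (Int.cast : ℤ → ℝ)))
      (((M⁻¹).map (Int.cast : ℤ → ℝ))ᵀ * R * (M⁻¹).map (Int.cast : ℤ → ℝ)) X Y) ∧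
    Summable (thetaTerm n (matS1 n (S.map (Int.cast : ℤ → ℝ))) R X Y) ∧
    ∑' ℓ : Matrix (Fin (n + 4)) (Fin 2) ℤ,
        thetaTerm n (matS1 n (S.map (Int.cast : ℤ → ℝ)))
          (((M⁻¹).map (Int.cast : ℤ → ℝ))ᵀ * R * (M⁻¹).map (Int.cast : ℤ → ℝ)) X Y ℓ =
      ∑' ℓ : Matrix (Fin (n + 4)) (Fin 2) ℤ,
        thetaTerm n (matS1 n (S.map (Int.cast : ℤ → ℝ))) R X Y ℓ := by
  classical
  set S1 := matS1 n (S.map (Int.cast : ℤ → ℝ)) with hS1def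
  set R' := ((M⁻¹).map (Int.cast : ℤ → ℝ))ᵀ * R * (M⁻¹).map (Int.cast : ℤ → ℝ) with hR'def
  have hMl : M⁻¹ * M = 1 := Matrix.nonsing_inv_mul M hMunit
  have hMr : M * M⁻¹ = 1 := Matrix.mul_nonsing_inv M hMunit
  have hone : ((1 : Matrix (Fin (n + 4)) (Fin (n + 4)) ℤ)).map (Int.cast : ℤ → ℝ) = 1 := by
    ext i j
    simp [Matrix.one_apply, Matrix.map_apply, apply_ite (Int.cast : ℤ → ℝ)]
  have hinv : (M⁻¹).map (Int.cast : ℤ → ℝ) * M.map (Int.cast : ℤ → ℝ) = 1 := by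
    rw [← map_mul_int, hMl, hone]
  have hterm : ∀ ℓ : Matrix (Fin (n + 4)) (Fin 2) ℤ,
      thetaTerm n S1 R' X Y (M * ℓ) = thetaTerm n S1 R X Y ℓ := by
    intro ℓ
    have h1 : ((M * ℓ).map (Int.cast : ℤ → ℝ))ᵀ * S1 * (M * ℓ).map (Int.cast : ℤ → ℝ) =
        (ℓ.map (Int.cast : ℤ → ℝ))ᵀ * S1 * ℓ.map (Int.cast : ℤ → ℝ) := by
      rw [map_mul_int]
      calc (M.map (Int.cast : ℤ → ℝ) * ℓ.map (Int.cast : ℤ → ℝ))ᵀ * S1 *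
            (M.map (Int.cast : ℤ → ℝ) * ℓ.map (Int.cast : ℤ → ℝ))
          = (ℓ.map (Int.cast : ℤ → ℝ))ᵀ *
              ((M.map (Int.cast : ℤ → ℝ))ᵀ * S1 * M.map (Int.cast : ℤ → ℝ)) *
              ℓ.map (Int.cast : ℤ → ℝ) := by
            simp only [Matrix.transpose_mul, Matrix.mul_assoc]
        _ = (ℓ.map (Int.cast : ℤ → ℝ))ᵀ * S1 * ℓ.map (Int.cast : ℤ → ℝ) := by rw [hM]
    have h2 : ((M * ℓ).map (Int.cast : ℤ → ℝ))ᵀ * R' * (M * ℓ).map (Int.cast : ℤ → ℝ) =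
        (ℓ.map (Int.cast : ℤ → ℝ))ᵀ * R * ℓ.map (Int.cast : ℤ → ℝ) := by
      rw [map_mul_int, hR'def]
      calc (M.map (Int.cast : ℤ → ℝ) * ℓ.map (Int.cast : ℤ → ℝ))ᵀ *
            (((M⁻¹).map (Int.cast : ℤ → ℝ))ᵀ * R * (M⁻¹).map (Int.cast : ℤ → ℝ)) *
            (M.map (Int.cast : ℤ → ℝ) * ℓ.map (Int.cast : ℤ → ℝ))
          = (ℓ.map (Int.cast : ℤ → ℝ))ᵀ *
              (((M⁻¹).map (Int.cast : ℤ → ℝ) * M.map (Int.cast : ℤ → ℝ))ᵀ * R *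
                ((M⁻¹).map (Int.cast : ℤ → ℝ) * M.map (Int.cast : ℤ → ℝ))) *
              ℓ.map (Int.cast : ℤ → ℝ) := by
            simp only [Matrix.transpose_mul, Matrix.mul_assoc]
        _ = (ℓ.map (Int.cast : ℤ → ℝ))ᵀ * R * ℓ.map (Int.cast : ℤ → ℝ) := by
            rw [hinv]
            simp [Matrix.transpose_one]
    rw [thetaTerm, thetaTerm, h1, h2]
  let e : Matrix (Fin (n + 4)) (Fin 2) ℤ ≃ Matrix (Fin (n + 4)) (Fin 2) ℤ :=
    { toFun := fun ℓ => M * ℓ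
      invFun := fun ℓ => M⁻¹ * ℓ
      left_inv := fun ℓ => by show M⁻¹ * (M * ℓ) = ℓ; rw [← Matrix.mul_assoc, hMl, Matrix.one_mul]
      right_inv := fun ℓ => by show M * (M⁻¹ * ℓ) = ℓ; rw [← Matrix.mul_assoc, hMr, Matrix.one_mul] }
  have hsumR : Summable (thetaTerm n S1 R X Y) := summable_theta n S1 hRpos X hYpos
  have hcomp : (thetaTerm n S1 R' X Y) ∘ e = thetaTerm n S1 R X Y := funext fun ℓ => hterm ℓ
  have hsumR' : Summable (thetaTerm n S1 R' X Y) := by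
    refine (Equiv.summable_iff e).mp ?_
    rw [hcomp]
    exact hsumR
  refine ⟨hsumR', hsumR, ?_⟩
  calc ∑' ℓ, thetaTerm n S1 R' X Y ℓ
      = ∑' ℓ, thetaTerm n S1 R' X Y (e ℓ) := (e.tsum_eq _).symm
    _ = ∑' ℓ, thetaTerm n S1 R X Y ℓ := tsum_congr hterm

end
end
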